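/- Fix n ≥ 1, σ > 0 and an integer s ≥ 3. Then for every α ∈ ℝ, φ(α) = exp( 2πi M_n α − 2π² B_n² α² + Σ_{l=3}^{s−1} ((2πi)^l ρ_l / l!) α^l + R(α) ), where the remainder satisfies |R(α)| ≤ (2π)^s ρ_s |α|^s / s!. -/

import Mathlib

open Finset Filter

/-- The number of multisets of total size `n` determined by the parameters `a j`
(the number of one-component multisets of size `j`), i.e.
`c_n = Σ_{η ∈ Ω_n} Π_{j=1}^n C(a_j + η_j - 1, η_j)` where
`Ω_n = {η : Σ_{j=1}^n j·η_j = n}` (indices shifted: `j ∈ Fin n` stands for `j+1`). -/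
def multisetCount (a : ℕ → ℕ) (n : ℕ) : ℕ :=
  ∑ η : Fin n → Fin (n + 1),
    if ∑ j : Fin n, (j.1 + 1) * (η j).1 = n then
      ∏ j : Fin n, Nat.choose (a (j.1 + 1) + (η j).1 - 1) (η j).1
    else 0

/-- `M_n(σ) = Σ_{j=1}^n j a_j e^{-jσ}/(1-e^{-jσ})`. -/
noncomputable def Mfun (a : ℕ → ℕ) (n : ℕ) (σ : ℝ) : ℝ :=
  ∑ j ∈ Finset.Icc 1 n, (j : ℝ) * (a j) * Real.exp (-(j * σ)) / (1 - Real.exp (-(j * σ)))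

/-- `B_n²(σ) = Σ_{j=1}^n j² a_j e^{-jσ}/(1-e^{-jσ})²`. -/
noncomputable def B2 (a : ℕ → ℕ) (n : ℕ) (σ : ℝ) : ℝ :=
  ∑ j ∈ Finset.Icc 1 n, (j : ℝ) ^ 2 * (a j) * Real.exp (-(j * σ)) / (1 - Real.exp (-(j * σ))) ^ 2

/-- `ρ_l(n, σ) = Σ_{j=1}^n j^l a_j Σ_{k≥1} k^{l-1} e^{-jkσ}`. -/
noncomputable def rho (a : ℕ → ℕ) (l n : ℕ) (σ : ℝ) : ℝ :=
  ∑ j ∈ Finset.Icc 1 n, (j : ℝ) ^ l * (a j) *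
    ∑' k : ℕ, ((k : ℝ) + 1) ^ (l - 1) * Real.exp (-((j : ℝ) * ((k : ℝ) + 1) * σ))

/-- The characteristic function `φ(α) = Π_{j=1}^n ((1-e^{-jσ})/(1-e^{-jσ}e^{2πiαj}))^{a_j}`. -/
noncomputable def phi (a : ℕ → ℕ) (n : ℕ) (σ : ℝ) (α : ℝ) : ℂ :=
  ∏ j ∈ Finset.Icc 1 n,
    (((1 - Real.exp (-(j * σ)) : ℝ) : ℂ) /
      (1 - ((Real.exp (-(j * σ)) : ℝ) : ℂ) *
        Complex.exp (2 * Real.pi * Complex.I * α * j))) ^ (a j)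


noncomputable def expRem (m : ℕ) (x : ℝ) : ℂ :=
  Complex.exp (x * Complex.I) - ∑ l ∈ Finset.range m, (x * Complex.I) ^ l / l.factorial

lemma expRem_deriv (m : ℕ) (t : ℝ) :
    HasDerivAt (fun x : ℝ => expRem (m + 1) x) (Complex.I * expRem m t) t := by
  have h1 : HasDerivAt (fun z : ℂ => Complex.exp (z * Complex.I) -
      ∑ l ∈ range (m + 1), (z * Complex.I) ^ l / l.factorial)
      (Complex.I * expRem m t) (t : ℂ) := by
    have he : HasDerivAt (fun z : ℂ => Complex.exp (z * Complex.I))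
        (Complex.exp ((t:ℂ) * Complex.I) * Complex.I) (t : ℂ) := by
      simpa [Function.comp_def] using (Complex.hasDerivAt_exp ((t:ℂ) * Complex.I)).comp (t:ℂ)
        ((hasDerivAt_id (t:ℂ)).mul_const Complex.I)
    have hp : ∀ l : ℕ, HasDerivAt (fun z : ℂ => (z * Complex.I) ^ l / l.factorial)
        ((l : ℂ) * ((t:ℂ) * Complex.I) ^ (l - 1) * Complex.I / l.factorial) (t : ℂ) := by
      intro l
      simpa using ((hasDerivAt_pow l ((t:ℂ) * Complex.I)).comp (t:ℂ)
        ((hasDerivAt_id (t:ℂ)).mul_const Complex.I)).div_const (l.factorial : ℂ)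
    have hsum := HasDerivAt.fun_sum (u := range (m + 1)) (fun l _ => hp l)
    have hder := he.fun_sub hsum
    convert hder using 1
    · rfl
    · rfl
    rw [expRem, mul_sub, mul_comm Complex.I (Complex.exp _)]
    congr 1
    rw [Finset.mul_sum, Finset.sum_range_succ']
    simp only [Nat.cast_zero, zero_mul, zero_div, add_zero]
    refine Finset.sum_congr rfl fun l _ => ?_
    have hfac : (((l+1).factorial : ℕ) : ℂ) = ((l:ℂ)+1) * (l.factorial : ℂ) := by
      push_cast [Nat.factorial_succ]; ring
    have hl1 : ((l:ℂ) + 1) ≠ 0 := Nat.cast_add_one_ne_zero l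
    push_cast
    rw [hfac, mul_assoc ((l:ℂ)+1), mul_div_mul_left _ _ hl1]
    ring
  exact h1.comp_ofReal

lemma continuous_expRem (m : ℕ) : Continuous (expRem m) := by
  unfold expRem; fun_prop

lemma expRem_neg (m : ℕ) (x : ℝ) : expRem m (-x) = (starRingEnd ℂ) (expRem m x) := by
  simp only [expRem, map_sub, map_sum, map_div₀, map_pow, map_mul, Complex.conj_ofReal,
    Complex.conj_I, map_natCast, ← Complex.exp_conj, Complex.ofReal_neg, neg_mul, mul_neg]

lemma expRem_zero_eval (m : ℕ) : expRem (m + 1) 0 = 0 := by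
  simp [expRem, Finset.sum_range_succ', zero_pow]

lemma norm_expRem_le (m : ℕ) (x : ℝ) : ‖expRem m x‖ ≤ |x| ^ m / m.factorial := by
  induction m generalizing x with
  | zero => simp [expRem, Complex.norm_exp_ofReal_mul_I]
  | succ m ih =>
    have key : ∀ y : ℝ, 0 ≤ y → ‖expRem (m + 1) y‖ ≤ |y| ^ (m + 1) / (m + 1).factorial := by
      intro y hy
      have hint : ∫ t in (0:ℝ)..y, Complex.I * expRem m t
          = expRem (m + 1) y - expRem (m + 1) 0 := by
        refine intervalIntegral.integral_eq_sub_of_hasDerivAt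
          (fun t _ => expRem_deriv m t) ?_
        exact ((continuous_const.mul (continuous_expRem m)).intervalIntegrable 0 y)
      have hb : ‖∫ t in (0:ℝ)..y, Complex.I * expRem m t‖
          ≤ |∫ t in (0:ℝ)..y, t ^ m / m.factorial| := by
        refine intervalIntegral.norm_integral_le_abs_of_norm_le ?_ ?_
        · filter_upwards [MeasureTheory.ae_restrict_mem measurableSet_uIoc] with t ht
          rw [Set.uIoc_of_le hy] at ht
          have := ih t
          rw [norm_mul, Complex.norm_I, one_mul]
          refine this.trans ?_
          rw [abs_of_pos ht.1]
        · exact (Continuous.intervalIntegrable (by fun_prop) 0 y)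
      rw [expRem_zero_eval, sub_zero] at hint
      rw [← hint]
      refine hb.trans ?_
      rw [intervalIntegral.integral_div, integral_pow, zero_pow (by omega : m + 1 ≠ 0),
        sub_zero, abs_of_nonneg (by positivity), abs_of_nonneg hy, Nat.factorial_succ]
      push_cast
      rw [div_div]
    rcases le_or_gt 0 x with hx | hx
    · exact key x hx
    · have h1 : ‖expRem (m+1) x‖ = ‖expRem (m+1) (-x)‖ := by
        rw [show x = -(-x) by ring, expRem_neg]
        simp [show -(-x) = x by ring]
      rw [h1, ← abs_neg x]
      exact key (-x) (by linarith)

section S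
/-- `Sgeo m q = ∑' k, (k+1)^m q^(k+1)` -/
noncomputable def Sgeo (m : ℕ) (q : ℝ) : ℝ := ∑' k : ℕ, ((k : ℝ) + 1) ^ m * q ^ (k + 1)

variable {q : ℝ} (h0 : 0 ≤ q) (h1 : q < 1)

lemma summable_Sgeo (m : ℕ) (h0 : 0 ≤ q) (h1 : q < 1) :
    Summable (fun k : ℕ => ((k : ℝ) + 1) ^ m * q ^ (k + 1)) := by
  have hq : ‖q‖ < 1 := by rwa [Real.norm_eq_abs, abs_of_nonneg h0]
  have := (summable_nat_add_iff (f := fun k : ℕ => (k : ℝ) ^ m * q ^ k) 1).2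
    (summable_pow_mul_geometric_of_norm_lt_one m hq)
  refine this.congr fun k => ?_
  push_cast
  ring

lemma Sgeo_nonneg (m : ℕ) (h0 : 0 ≤ q) : 0 ≤ Sgeo m q :=
  tsum_nonneg fun k => by positivity

lemma Sgeo_zero (h0 : 0 ≤ q) (h1 : q < 1) : Sgeo 0 q = q / (1 - q) := by
  have : ∀ k : ℕ, ((k : ℝ) + 1) ^ 0 * q ^ (k + 1) = q * q ^ k := fun k => by
    rw [pow_zero, one_mul, pow_succ]; ring
  rw [Sgeo, tsum_congr this, tsum_mul_left, tsum_geometric_of_lt_one h0 h1,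
    div_eq_mul_inv]

lemma Sgeo_one (h0 : 0 ≤ q) (h1 : q < 1) : Sgeo 1 q = q / (1 - q) ^ 2 := by
  have hq : ‖q‖ < 1 := by rwa [Real.norm_eq_abs, abs_of_nonneg h0]
  have hs : Summable (fun k : ℕ => (k : ℝ) * q ^ k) := by
    have := summable_pow_mul_geometric_of_norm_lt_one 1 hq
    simpa using this
  have h := tsum_coe_mul_geometric_of_norm_lt_one hq
  have h2 := Summable.tsum_eq_zero_add hs
  simp only [Nat.cast_zero, zero_mul, pow_zero, zero_add] at h2
  rw [Sgeo, tsum_congr (fun k : ℕ => show ((k:ℝ)+1)^1 * q^(k+1) = ((k+1 : ℕ) : ℝ) * q^(k+1)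
    by push_cast; ring), ← h2, h]

end S

section PerJ

variable {σ : ℝ} (hσ : 0 < σ) {j : ℕ} (hj : 1 ≤ j) (α : ℝ)

local notation "π" => Real.pi

lemma q_pos (hσ : 0 < σ) (j : ℕ) : 0 < Real.exp (-(j * σ)) := Real.exp_pos _

lemma q_lt_one (hσ : 0 < σ) (hj : 1 ≤ j) : Real.exp (-((j : ℝ) * σ)) < 1 := by
  rw [Real.exp_lt_one_iff]
  have : (1 : ℝ) ≤ (j : ℝ) := by exact_mod_cast hj
  nlinarith

lemma norm_e_eq_one (α : ℝ) (j : ℕ) : ‖Complex.exp (2 * π * Complex.I * α * j)‖ = 1 := by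
  have h : (2 * (π : ℂ) * Complex.I * α * j) = ((2 * π * α * j : ℝ) : ℂ) * Complex.I := by
    push_cast; ring
  rw [h, Complex.norm_exp_ofReal_mul_I]

lemma e_pow (α : ℝ) (j k : ℕ) :
    Complex.exp (2 * π * Complex.I * α * j) ^ (k + 1)
      = Complex.exp (((2 * π * α * j * (k + 1) : ℝ) : ℂ) * Complex.I) := by
  rw [← Complex.exp_nat_mul]
  congr 1
  push_cast
  ring

lemma hasSum_L (hσ : 0 < σ) (hj : 1 ≤ j) (α : ℝ) :
    HasSum (fun k : ℕ =>
      ((Real.exp (-((j:ℝ) * σ)) : ℝ) : ℂ) ^ (k + 1) / ((k : ℂ) + 1) *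
        (Complex.exp (2 * π * Complex.I * α * j) ^ (k + 1) - 1))
      (Complex.log ((1 - Real.exp (-((j:ℝ) * σ)) : ℝ) : ℂ) -
        Complex.log (1 - ((Real.exp (-((j:ℝ) * σ)) : ℝ) : ℂ) *
          Complex.exp (2 * π * Complex.I * α * j))) := by
  set q : ℝ := Real.exp (-((j:ℝ) * σ)) with hqdef
  set e : ℂ := Complex.exp (2 * π * Complex.I * α * j) with hedef
  have hq0 : 0 < q := Real.exp_pos _
  have hq1 : q < 1 := q_lt_one hσ hj
  have hnw : ‖(q : ℂ) * e‖ < 1 := by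
    rw [norm_mul, norm_e_eq_one, mul_one, Complex.norm_real, Real.norm_eq_abs,
      abs_of_pos hq0]
    exact hq1
  have hnq : ‖(q : ℂ)‖ < 1 := by
    rw [Complex.norm_real, Real.norm_eq_abs, abs_of_pos hq0]; exact hq1
  have h1 := Complex.hasSum_taylorSeries_neg_log hnw
  have h2 := Complex.hasSum_taylorSeries_neg_log hnq
  have hd := h1.sub h2
  have hd' := (hasSum_nat_add_iff' (f := fun k : ℕ =>
      ((q : ℂ) * e) ^ k / k - (q : ℂ) ^ k / k) 1).2 hd
  simp only [Finset.sum_range_one, Nat.cast_zero, pow_zero, div_zero, sub_zero] at hd'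
  have heq : (fun k : ℕ => ((q : ℂ) * e) ^ (k + 1) / (↑(k + 1)) - (q : ℂ) ^ (k + 1) / (↑(k + 1)))
      = fun k : ℕ => (q : ℂ) ^ (k + 1) / ((k : ℂ) + 1) * (e ^ (k + 1) - 1) := by
    funext k
    rw [mul_pow]
    push_cast
    ring
  rw [heq] at hd'
  have hval : -Complex.log (1 - (q : ℂ) * e) - -Complex.log (1 - (q : ℂ))
      = Complex.log ((1 - q : ℝ) : ℂ) - Complex.log (1 - (q : ℂ) * e) := by
    push_cast
    ring
  rw [hval] at hd'
  exact hd'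

end PerJ

section Rem

local notation "π" => Real.pi

lemma norm_term_le (s : ℕ) (hs : 1 ≤ s) {q : ℝ} (h0 : 0 ≤ q) (α : ℝ) (j k : ℕ) :
    ‖(q : ℂ) ^ (k + 1) / ((k : ℂ) + 1) * expRem s (2 * π * α * j * ((k : ℝ) + 1))‖
      ≤ (2 * π * |α| * j) ^ s / s.factorial * (((k : ℝ) + 1) ^ (s - 1) * q ^ (k + 1)) := by
  have hk1 : (0 : ℝ) < (k : ℝ) + 1 := by positivity
  have hA : ‖(q : ℂ) ^ (k + 1) / ((k : ℂ) + 1)‖ = q ^ (k + 1) / ((k : ℝ) + 1) := by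
    rw [norm_div, norm_pow, Complex.norm_real, Real.norm_eq_abs, abs_of_nonneg h0]
    congr 1
    have : ((k : ℂ) + 1) = (((k : ℝ) + 1 : ℝ) : ℂ) := by push_cast; ring
    rw [this, Complex.norm_real, Real.norm_eq_abs, abs_of_pos hk1]
  have habs : |2 * π * α * (j : ℝ) * ((k : ℝ) + 1)| = 2 * π * |α| * j * ((k : ℝ) + 1) := by
    rw [abs_mul, abs_mul, abs_mul, abs_of_nonneg (by positivity : (0:ℝ) ≤ 2 * π),
      Nat.abs_cast, abs_of_pos hk1]
  calc ‖(q : ℂ) ^ (k + 1) / ((k : ℂ) + 1) * expRem s (2 * π * α * j * ((k : ℝ) + 1))‖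
      = q ^ (k + 1) / ((k : ℝ) + 1) * ‖expRem s (2 * π * α * j * ((k : ℝ) + 1))‖ := by
        rw [norm_mul, hA]
    _ ≤ q ^ (k + 1) / ((k : ℝ) + 1) *
          (|2 * π * α * (j : ℝ) * ((k : ℝ) + 1)| ^ s / s.factorial) := by
        refine mul_le_mul_of_nonneg_left (norm_expRem_le s _) (by positivity)
    _ = (2 * π * |α| * j) ^ s / s.factorial * (((k : ℝ) + 1) ^ (s - 1) * q ^ (k + 1)) := by
        rw [habs, mul_pow (2 * π * |α| * (j:ℝ))]
        have hks : ((k:ℝ) + 1) ^ s = ((k:ℝ) + 1) ^ (s - 1) * ((k:ℝ) + 1) := by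
          rw [← pow_succ]; congr 1; omega
        rw [hks]
        have hfac : (0:ℝ) < s.factorial := by exact_mod_cast s.factorial_pos
        field_simp

lemma summable_rterm (s : ℕ) (hs : 1 ≤ s) {q : ℝ} (h0 : 0 ≤ q) (h1 : q < 1) (α : ℝ) (j : ℕ) :
    Summable (fun k : ℕ =>
      (q : ℂ) ^ (k + 1) / ((k : ℂ) + 1) * expRem s (2 * π * α * j * ((k : ℝ) + 1))) := by
  refine Summable.of_norm (Summable.of_nonneg_of_le (fun k => norm_nonneg _)
    (fun k => norm_term_le s hs h0 α j k) ?_)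
  exact (summable_Sgeo (s - 1) h0 h1).mul_left _

/-- the remainder function for a single `j` -/
noncomputable def rfun (σ : ℝ) (s j : ℕ) (α : ℝ) : ℂ :=
  ∑' k : ℕ, ((Real.exp (-((j:ℝ) * σ)) : ℝ) : ℂ) ^ (k + 1) / ((k : ℂ) + 1) *
    expRem s (2 * π * α * j * ((k : ℝ) + 1))

lemma norm_rfun_le (σ : ℝ) (hσ : 0 < σ) (s : ℕ) (hs : 1 ≤ s) (j : ℕ) (hj : 1 ≤ j) (α : ℝ) :
    ‖rfun σ s j α‖ ≤ (2 * π * |α| * j) ^ s / s.factorial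
      * Sgeo (s - 1) (Real.exp (-((j:ℝ) * σ))) := by
  set q : ℝ := Real.exp (-((j:ℝ) * σ)) with hqdef
  have h0 : 0 ≤ q := (Real.exp_pos _).le
  have h1 : q < 1 := q_lt_one hσ hj
  have hsum : Summable (fun k : ℕ =>
      ‖(q : ℂ) ^ (k + 1) / ((k : ℂ) + 1) * expRem s (2 * π * α * j * ((k : ℝ) + 1))‖) :=
    Summable.of_nonneg_of_le (fun k => norm_nonneg _)
      (fun k => norm_term_le s hs h0 α j k) ((summable_Sgeo (s - 1) h0 h1).mul_left _)
  refine (norm_tsum_le_tsum_norm hsum).trans ?_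
  have := Summable.tsum_le_tsum (fun k => norm_term_le s hs h0 α j k) hsum
    ((summable_Sgeo (s - 1) h0 h1).mul_left _)
  refine this.trans ?_
  rw [tsum_mul_left, Sgeo]

end Rem

section Key

local notation "π" => Real.pi

lemma key_L {σ : ℝ} (hσ : 0 < σ) {j : ℕ} (hj : 1 ≤ j) {s : ℕ} (hs : 3 ≤ s) (α : ℝ) :
    Complex.log ((1 - Real.exp (-((j:ℝ) * σ)) : ℝ) : ℂ) -
      Complex.log (1 - ((Real.exp (-((j:ℝ) * σ)) : ℝ) : ℂ) *
        Complex.exp (2 * π * Complex.I * α * j))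
    = (∑ l ∈ Finset.Icc 1 (s - 1),
        (2 * (π:ℂ) * Complex.I * α * j) ^ l / l.factorial *
          ((Sgeo (l - 1) (Real.exp (-((j:ℝ) * σ))) : ℝ) : ℂ))
      + rfun σ s j α := by
  set q : ℝ := Real.exp (-((j:ℝ) * σ)) with hqdef
  have h0 : 0 ≤ q := (Real.exp_pos _).le
  have h1 : q < 1 := q_lt_one hσ hj
  -- HasSum for the polynomial part
  have hg : ∀ l ∈ Finset.Icc 1 (s - 1),
      HasSum (fun k : ℕ => (2 * (π:ℂ) * Complex.I * α * j) ^ l / l.factorial *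
          (((((k:ℝ) + 1) ^ (l - 1) * q ^ (k + 1) : ℝ)) : ℂ))
        ((2 * (π:ℂ) * Complex.I * α * j) ^ l / l.factorial *
          ((Sgeo (l - 1) q : ℝ) : ℂ)) := by
    intro l _
    exact (Complex.hasSum_ofReal.2 (summable_Sgeo (l - 1) h0 h1).hasSum).mul_left _
  have hgs := hasSum_sum hg
  have hr : HasSum (fun k : ℕ => (q : ℂ) ^ (k + 1) / ((k : ℂ) + 1) *
      expRem s (2 * π * α * j * ((k : ℝ) + 1))) (rfun σ s j α) :=
    (summable_rterm s (by omega) h0 h1 α j).hasSum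
  have htot := hgs.add hr
  refine (hasSum_L hσ hj α).unique ?_
  have hkey : ∀ k : ℕ, (q : ℂ) ^ (k + 1) / ((k : ℂ) + 1) *
      (Complex.exp (2 * π * Complex.I * α * j) ^ (k + 1) - 1)
      = (∑ l ∈ Finset.Icc 1 (s - 1),
          (2 * (π:ℂ) * Complex.I * α * j) ^ l / l.factorial *
            (((((k:ℝ) + 1) ^ (l - 1) * q ^ (k + 1) : ℝ)) : ℂ))
        + (q : ℂ) ^ (k + 1) / ((k : ℂ) + 1) *
            expRem s (2 * π * α * j * ((k : ℝ) + 1)) := by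
    intro k
    set y : ℝ := 2 * π * α * j * ((k : ℝ) + 1) with hydef
    rw [e_pow]
    have hexp : Complex.exp ((y : ℂ) * Complex.I)
        = (∑ l ∈ range s, ((y:ℂ) * Complex.I) ^ l / l.factorial) + expRem s y := by
      rw [expRem]; ring
    rw [hexp]
    have hsplit : (∑ l ∈ range s, ((y:ℂ) * Complex.I) ^ l / l.factorial)
        = 1 + ∑ l ∈ Finset.Icc 1 (s - 1), ((y:ℂ) * Complex.I) ^ l / l.factorial := by
      have h0s : (0 : ℕ) ∈ range s := by simp; omega
      rw [← Finset.add_sum_erase _ _ h0s]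
      congr 1
      · simp
      · congr 1
        ext l
        simp only [Finset.mem_erase, Finset.mem_range, Finset.mem_Icc]
        omega
    rw [hsplit]
    have hterm : ∀ l ∈ Finset.Icc 1 (s - 1),
        (q : ℂ) ^ (k + 1) / ((k : ℂ) + 1) * (((y:ℂ) * Complex.I) ^ l / l.factorial)
        = (2 * (π:ℂ) * Complex.I * α * j) ^ l / l.factorial *
            (((((k:ℝ) + 1) ^ (l - 1) * q ^ (k + 1) : ℝ)) : ℂ) := by
      intro l hl
      have hl1 : 1 ≤ l := (Finset.mem_Icc.1 hl).1
      have harg : (y : ℂ) * Complex.I = (2 * (π:ℂ) * Complex.I * α * j) * ((k : ℂ) + 1) := by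
        rw [hydef]; push_cast; ring
      rw [harg, mul_pow]
      have hkpow : ((k : ℂ) + 1) ^ l = ((k : ℂ) + 1) ^ (l - 1) * ((k : ℂ) + 1) := by
        rw [← pow_succ]; congr 1; omega
      rw [hkpow]
      have hk0 : ((k : ℂ) + 1) ≠ 0 := by
        have : ((k : ℂ) + 1) = ((k + 1 : ℕ) : ℂ) := by push_cast; ring
        rw [this]; exact Nat.cast_ne_zero.2 (Nat.succ_ne_zero k)
      have hfac : (l.factorial : ℂ) ≠ 0 := by exact_mod_cast l.factorial_ne_zero
      push_cast
      field_simp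
    have hsimp : (1 : ℂ) + (∑ l ∈ Finset.Icc 1 (s - 1), ((y:ℂ) * Complex.I) ^ l / l.factorial)
        + expRem s y - 1
        = (∑ l ∈ Finset.Icc 1 (s - 1), ((y:ℂ) * Complex.I) ^ l / l.factorial) + expRem s y := by
      ring
    rw [hsimp, mul_add, Finset.mul_sum, Finset.sum_congr rfl hterm]
  exact (funext hkey).symm ▸ htot

end Key

section Main

local notation "π" => Real.pi

lemma rho_eq (a : ℕ → ℕ) (l n : ℕ) (σ : ℝ) :
    rho a l n σ = ∑ j ∈ Finset.Icc 1 n,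
      (j : ℝ) ^ l * (a j) * Sgeo (l - 1) (Real.exp (-((j:ℝ) * σ))) := by
  refine Finset.sum_congr rfl fun j hj => ?_
  congr 1
  refine tsum_congr fun k => ?_
  congr 1
  rw [← Real.exp_nat_mul]
  congr 1
  push_cast
  ring

lemma phi_eq_exp (a : ℕ → ℕ) (n : ℕ) (σ : ℝ) (hσ : 0 < σ) (α : ℝ) :
    phi a n σ α = Complex.exp (∑ j ∈ Finset.Icc 1 n, (a j : ℂ) *
      (Complex.log ((1 - Real.exp (-((j:ℝ) * σ)) : ℝ) : ℂ) -
        Complex.log (1 - ((Real.exp (-((j:ℝ) * σ)) : ℝ) : ℂ) *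
          Complex.exp (2 * π * Complex.I * α * j)))) := by
  rw [Complex.exp_sum, phi]
  refine Finset.prod_congr rfl fun j hj => ?_
  have hj1 : 1 ≤ j := (Finset.mem_Icc.1 hj).1
  set q : ℝ := Real.exp (-((j:ℝ) * σ)) with hqdef
  set e : ℂ := Complex.exp (2 * π * Complex.I * α * j) with hedef
  have hq0 : 0 < q := Real.exp_pos _
  have hq1 : q < 1 := q_lt_one hσ hj1
  have hne1 : ((1 - q : ℝ) : ℂ) ≠ 0 := by
    rw [Complex.ofReal_ne_zero]
    nlinarith
  have hne2 : (1 : ℂ) - (q : ℂ) * e ≠ 0 := by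
    intro h
    rw [sub_eq_zero] at h
    have hw : ‖(q : ℂ) * e‖ < 1 := by
      rw [norm_mul, norm_e_eq_one, mul_one, Complex.norm_real, Real.norm_eq_abs,
        abs_of_pos hq0]
      exact hq1
    rw [← h, norm_one] at hw
    exact lt_irrefl 1 hw
  rw [show ((a j : ℂ)) * _ = ((a j : ℕ) : ℂ) * _ from rfl, Complex.exp_nat_mul,
    Complex.exp_sub, Complex.exp_log hne1, Complex.exp_log hne2]

end Main

local notation "π" => Real.pi



/-- for fixed `n ≥ 1`, `σ > 0` and an integer `s ≥ 3`, for every `α ∈ ℝ`,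
`φ(α) = exp(2πi M_n α - 2π² B_n² α² + Σ_{l=3}^{s-1} ((2πi)^l ρ_l / l!) α^l + R(α))`
with `|R(α)| ≤ (2π)^s ρ_s |α|^s / s!`. -/
theorem phi_expansion (a : ℕ → ℕ) (n : ℕ) (hn : 1 ≤ n) (σ : ℝ) (hσ : 0 < σ)
    (s : ℕ) (hs : 3 ≤ s) :
    ∃ R : ℝ → ℂ,
      (∀ α : ℝ, phi a n σ α =
        Complex.exp (2 * (Real.pi : ℂ) * Complex.I * (Mfun a n σ : ℝ) * (α : ℝ)
          - 2 * (Real.pi : ℂ) ^ 2 * (B2 a n σ : ℝ) * (α : ℝ) ^ 2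
          + (∑ l ∈ Finset.Icc 3 (s - 1),
              (2 * (Real.pi : ℂ) * Complex.I) ^ l * (rho a l n σ : ℝ) / (Nat.factorial l)
                * (α : ℝ) ^ l)
          + R α)) ∧
      ∀ α : ℝ, ‖R α‖ ≤ (2 * Real.pi) ^ s * rho a s n σ * |α| ^ s / (Nat.factorial s) := by
  refine ⟨fun α => ∑ j ∈ Finset.Icc 1 n, (a j : ℂ) * rfun σ s j α, ?_, ?_⟩
  · intro α
    rw [phi_eq_exp a n σ hσ α]
    congr 1
    -- rewrite each L_j via key_L
    have h1 : ∑ j ∈ Finset.Icc 1 n, (a j : ℂ) *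
        (Complex.log ((1 - Real.exp (-((j:ℝ) * σ)) : ℝ) : ℂ) -
          Complex.log (1 - ((Real.exp (-((j:ℝ) * σ)) : ℝ) : ℂ) *
            Complex.exp (2 * π * Complex.I * α * j)))
        = (∑ l ∈ Finset.Icc 1 (s - 1), ∑ j ∈ Finset.Icc 1 n, (a j : ℂ) *
            ((2 * (π:ℂ) * Complex.I * α * j) ^ l / l.factorial *
              ((Sgeo (l - 1) (Real.exp (-((j:ℝ) * σ))) : ℝ) : ℂ)))
          + ∑ j ∈ Finset.Icc 1 n, (a j : ℂ) * rfun σ s j α := by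
      rw [Finset.sum_comm, ← Finset.sum_add_distrib]
      refine Finset.sum_congr rfl fun j hj => ?_
      rw [key_L hσ (Finset.mem_Icc.1 hj).1 hs α, mul_add, Finset.mul_sum]
    rw [h1]
    -- split Icc 1 (s-1)
    have hset : Finset.Icc 1 (s - 1) = insert 1 (insert 2 (Finset.Icc 3 (s - 1))) := by
      ext l
      simp only [Finset.mem_Icc, Finset.mem_insert]
      omega
    have hm1 : (1 : ℕ) ∉ insert 2 (Finset.Icc 3 (s - 1)) := by
      simp only [Finset.mem_insert, Finset.mem_Icc]
      omega
    have hm2 : (2 : ℕ) ∉ Finset.Icc 3 (s - 1) := by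
      simp only [Finset.mem_Icc]
      omega
    rw [hset, Finset.sum_insert hm1, Finset.sum_insert hm2]
    -- evaluate l = 1 term
    have hW1 : ∑ j ∈ Finset.Icc 1 n, (a j : ℂ) *
        ((2 * (π:ℂ) * Complex.I * α * j) ^ 1 / (Nat.factorial 1) *
          ((Sgeo 0 (Real.exp (-((j:ℝ) * σ))) : ℝ) : ℂ))
        = 2 * (π : ℂ) * Complex.I * (Mfun a n σ : ℝ) * (α : ℝ) := by
      rw [Mfun, Complex.ofReal_sum, Finset.mul_sum, Finset.sum_mul]
      refine Finset.sum_congr rfl fun j hj => ?_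
      rw [Sgeo_zero (Real.exp_pos _).le (q_lt_one hσ (Finset.mem_Icc.1 hj).1),
        pow_one, Nat.factorial_one]
      push_cast
      ring
    -- evaluate l = 2 term
    have hW2 : ∑ j ∈ Finset.Icc 1 n, (a j : ℂ) *
        ((2 * (π:ℂ) * Complex.I * α * j) ^ 2 / (Nat.factorial 2) *
          ((Sgeo 1 (Real.exp (-((j:ℝ) * σ))) : ℝ) : ℂ))
        = -(2 * (π : ℂ) ^ 2 * (B2 a n σ : ℝ) * (α : ℝ) ^ 2) := by
      rw [B2, Complex.ofReal_sum]
      rw [show -(2 * (π : ℂ) ^ 2 * (∑ j ∈ Finset.Icc 1 n,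
          (((j : ℝ) ^ 2 * (a j) * Real.exp (-((j:ℝ) * σ)) /
            (1 - Real.exp (-((j:ℝ) * σ))) ^ 2 : ℝ) : ℂ)) * (α : ℝ) ^ 2)
          = ∑ j ∈ Finset.Icc 1 n, -(2 * (π : ℂ) ^ 2 *
            (((j : ℝ) ^ 2 * (a j) * Real.exp (-((j:ℝ) * σ)) /
            (1 - Real.exp (-((j:ℝ) * σ))) ^ 2 : ℝ) : ℂ) * (α : ℝ) ^ 2) from by
        rw [Finset.mul_sum, Finset.sum_mul, ← Finset.sum_neg_distrib]]
      refine Finset.sum_congr rfl fun j hj => ?_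
      rw [Sgeo_one (Real.exp_pos _).le (q_lt_one hσ (Finset.mem_Icc.1 hj).1),
        Nat.factorial_two]
      push_cast
      linear_combination (2 * (π:ℂ)^2 * (α:ℂ)^2 * (j:ℂ)^2 * (a j : ℂ) *
        (Complex.exp (-((j:ℂ) * σ)) / (1 - Complex.exp (-((j:ℂ) * σ)))^2)) *
          Complex.I_sq
    -- evaluate l ≥ 3 terms
    have hW3 : ∀ l ∈ Finset.Icc 3 (s - 1), ∑ j ∈ Finset.Icc 1 n, (a j : ℂ) *
        ((2 * (π:ℂ) * Complex.I * α * j) ^ l / (Nat.factorial l) *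
          ((Sgeo (l - 1) (Real.exp (-((j:ℝ) * σ))) : ℝ) : ℂ))
        = (2 * (π : ℂ) * Complex.I) ^ l * (rho a l n σ : ℝ) / (Nat.factorial l)
            * (α : ℝ) ^ l := by
      intro l hl
      rw [rho_eq, Complex.ofReal_sum]
      rw [show (2 * (π : ℂ) * Complex.I) ^ l * (∑ j ∈ Finset.Icc 1 n,
          (((j : ℝ) ^ l * (a j) * Sgeo (l - 1) (Real.exp (-((j:ℝ) * σ))) : ℝ) : ℂ))
            / (Nat.factorial l) * (α : ℝ) ^ l
          = ∑ j ∈ Finset.Icc 1 n, (2 * (π : ℂ) * Complex.I) ^ l *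
            (((j : ℝ) ^ l * (a j) * Sgeo (l - 1) (Real.exp (-((j:ℝ) * σ))) : ℝ) : ℂ)
            / (Nat.factorial l) * (α : ℝ) ^ l from by
        rw [Finset.mul_sum, Finset.sum_div, Finset.sum_mul]]
      refine Finset.sum_congr rfl fun j hj => ?_
      push_cast
      ring
    rw [hW1, hW2, Finset.sum_congr rfl hW3]
    ring
  · intro α
    set R := ∑ j ∈ Finset.Icc 1 n, (a j : ℂ) * rfun σ s j α with hR
    have hstep : ∀ j ∈ Finset.Icc 1 n, ‖(a j : ℂ) * rfun σ s j α‖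
        ≤ (a j : ℝ) * ((2 * π * |α| * j) ^ s / s.factorial
            * Sgeo (s - 1) (Real.exp (-((j:ℝ) * σ)))) := by
      intro j hj
      rw [norm_mul, Complex.norm_natCast]
      exact mul_le_mul_of_nonneg_left
        (norm_rfun_le σ hσ s (by omega) j (Finset.mem_Icc.1 hj).1 α) (Nat.cast_nonneg _)
    refine (norm_sum_le _ _).trans ((Finset.sum_le_sum hstep).trans (le_of_eq ?_))
    rw [rho_eq, Finset.mul_sum, Finset.sum_mul, Finset.sum_div]
    refine Finset.sum_congr rfl fun j hj => ?_
    ring
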